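/- Let (a(n)) be a sequence of real numbers satisfying: (i) a(n) = O(n^α); (ii) ∑_{n≤x} a(n) = O(x^β); (iii) ∑_{n≤x} a(n)² = cx + O(x^γ), with α, β, γ ≥ 0 and c > 0. If α + β < 1, then for any r with max{α+β, γ} < r < 1 and all sufficiently large x, the sequence (a(n)) has at least one sign change for n ∈ [x, x + x^r]; that is, there exist m, n ∈ [x, x+x^r] with a(m) > 0 and a(n) < 0. -/
import Mathlib

open Filter Real Finset

/-- Sign-change criterion: under O-bounds on `a`, its partial sums and partial sums of
squares (with positive mean), every interval `[x, x + x^r]` with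
`max (α+β) γ < r < 1` contains a sign change for all sufficiently large `x`. -/
theorem sign_change_in_short_interval
    (a : ℕ → ℝ) (α β γ c r : ℝ)
    (hα : 0 ≤ α) (hβ : 0 ≤ β) (hγ : 0 ≤ γ) (hc : 0 < c)
    (h1 : ∃ C : ℝ, ∀ n : ℕ, 1 ≤ n → |a n| ≤ C * (n : ℝ) ^ α)
    (h2 : ∃ C : ℝ, ∀ x : ℝ, 1 ≤ x → |∑ n ∈ Finset.Icc 1 ⌊x⌋₊, a n| ≤ C * x ^ β)
    (h3 : ∃ C : ℝ, ∀ x : ℝ, 1 ≤ x →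
      |(∑ n ∈ Finset.Icc 1 ⌊x⌋₊, (a n) ^ 2) - c * x| ≤ C * x ^ γ)
    (hab : α + β < 1) (hr1 : max (α + β) γ < r) (hr2 : r < 1) :
    ∃ X : ℝ, ∀ x : ℝ, X ≤ x →
      ∃ m n : ℕ, ((x : ℝ) ≤ m ∧ (m : ℝ) ≤ x + x ^ r) ∧
        ((x : ℝ) ≤ n ∧ (n : ℝ) ≤ x + x ^ r) ∧ 0 < a m ∧ a n < 0 := by
  obtain ⟨C1, hC1⟩ := h1
  obtain ⟨C2, hC2⟩ := h2
  obtain ⟨C3, hC3⟩ := h3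
  have hC1' : 0 ≤ C1 := by
    have h := hC1 1 le_rfl
    have h' : (0:ℝ) ≤ C1 * ((1:ℕ):ℝ) ^ α := le_trans (abs_nonneg _) h
    simpa using h'
  have hC2' : 0 ≤ C2 := by
    have h := hC2 1 le_rfl
    have h' : (0:ℝ) ≤ C2 * (1:ℝ) ^ β := le_trans (abs_nonneg _) h
    simpa using h'
  have hC3' : 0 ≤ C3 := by
    have h := hC3 1 le_rfl
    have h' : (0:ℝ) ≤ C3 * (1:ℝ) ^ γ := le_trans (abs_nonneg _) h
    simpa using h'
  set s := max (α + β) γ with hs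
  have hrs : 0 < r - s := sub_pos.2 hr1
  set K := 2 * C3 * (2:ℝ) ^ γ + 2 * (C1 * C2) * (2:ℝ) ^ (α + β) with hK
  clear_value s K
  have hinf : Tendsto (fun x : ℝ => x ^ (r - s)) atTop atTop := tendsto_rpow_atTop hrs
  have hev : ∀ᶠ x : ℝ in atTop, K / c < x ^ (r - s) ∧ 1 ≤ x :=
    (hinf.eventually_gt_atTop _).and (eventually_ge_atTop 1)
  obtain ⟨X, hX⟩ := eventually_atTop.mp hev
  refine ⟨X, fun x hx => ?_⟩
  obtain ⟨hxK, hx1⟩ := hX x hx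
  by_contra hcon
  push_neg at hcon
  have hx0 : (0:ℝ) < x := lt_of_lt_of_le one_pos hx1
  set y := x + x ^ r with hy
  clear_value y
  have hxr0 : 0 < x ^ r := rpow_pos_of_pos hx0 r
  have hxy : x ≤ y := by rw [hy]; exact le_add_of_nonneg_right hxr0.le
  have hy1 : 1 ≤ y := le_trans hx1 hxy
  have hxrx : x ^ r ≤ x := by
    calc x ^ r ≤ x ^ (1:ℝ) := rpow_le_rpow_of_exponent_le hx1 hr2.le
    _ = x := rpow_one x
  have hy2x : y ≤ 2 * x := by rw [hy]; linarith
  have h2x0 : (0:ℝ) < 2 * x := by linarith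
  set F := Finset.Ioc ⌊x⌋₊ ⌊y⌋₊ with hF
  clear_value F
  have hfloor1 : 1 ≤ ⌊x⌋₊ := Nat.le_floor (by exact_mod_cast hx1)
  have hmem : ∀ n ∈ F, x ≤ (n:ℝ) ∧ (n:ℝ) ≤ y ∧ 1 ≤ n := by
    intro n hn
    rw [hF, Finset.mem_Ioc] at hn
    have h1n : x ≤ (n:ℝ) := by
      have hlt := Nat.lt_floor_add_one x
      have hn1 : (⌊x⌋₊:ℝ) + 1 ≤ (n:ℝ) := by exact_mod_cast hn.1
      linarith
    have h2n : (n:ℝ) ≤ y := le_trans (Nat.cast_le.2 hn.2) (Nat.floor_le (by linarith))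
    exact ⟨h1n, h2n, by omega⟩
  have hsplit : ∀ f : ℕ → ℝ,
      (∑ n ∈ Finset.Icc 1 ⌊y⌋₊, f n) - ∑ n ∈ Finset.Icc 1 ⌊x⌋₊, f n = ∑ n ∈ F, f n := by
    intro f
    have hle : ⌊x⌋₊ ≤ ⌊y⌋₊ := Nat.floor_le_floor hxy
    have hIcc : ∀ m : ℕ, Finset.Icc 1 m = Finset.Ioc 0 m := by
      intro m
      ext n
      simp only [Finset.mem_Icc, Finset.mem_Ioc]
      omega
    rw [hF, hIcc, hIcc, ← Finset.sum_Ioc_consecutive f (Nat.zero_le ⌊x⌋₊) hle]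
    ring
  -- sign dichotomy
  have hsign : (∀ n ∈ F, 0 ≤ a n) ∨ (∀ n ∈ F, a n ≤ 0) := by
    by_cases hp : ∃ m ∈ F, 0 < a m
    · left
      obtain ⟨m, hm, ham⟩ := hp
      intro n hn
      obtain ⟨hm1, hm2, _⟩ := hmem m hm
      obtain ⟨hn1, hn2, _⟩ := hmem n hn
      exact hcon m n ⟨hm1, hm2⟩ ⟨hn1, hn2⟩ ham
    · right
      intro n hn
      by_contra hlt
      exact hp ⟨n, hn, by linarith⟩
  set M := C1 * (2 * x) ^ α with hM
  clear_value M
  have hM0 : 0 ≤ M := by rw [hM]; positivity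
  have habs : ∀ n ∈ F, |a n| ≤ M := by
    intro n hn
    obtain ⟨hn1, hn2, hn3⟩ := hmem n hn
    calc |a n| ≤ C1 * (n:ℝ) ^ α := hC1 n hn3
    _ ≤ C1 * (2*x) ^ α := by
        apply mul_le_mul_of_nonneg_left _ hC1'
        exact rpow_le_rpow (Nat.cast_nonneg n) (by linarith) hα
    _ = M := hM.symm
  have hupper : (∑ n ∈ F, (a n)^2) ≤ M * |∑ n ∈ F, a n| := by
    rcases hsign with hpos | hneg
    · rw [abs_of_nonneg (Finset.sum_nonneg hpos), Finset.mul_sum]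
      apply Finset.sum_le_sum
      intro n hn
      have h1 := habs n hn
      have h2 := hpos n hn
      have h3 : a n ≤ M := le_trans (le_abs_self _) h1
      nlinarith
    · rw [abs_of_nonpos (Finset.sum_nonpos hneg)]
      have heq : M * -(∑ n ∈ F, a n) = ∑ n ∈ F, M * -a n := by
        rw [← Finset.sum_neg_distrib, Finset.mul_sum]
      rw [heq]
      apply Finset.sum_le_sum
      intro n hn
      have h1 := habs n hn
      have h2 := hneg n hn
      have h3 : -a n ≤ M := le_trans (neg_le_abs _) h1
      nlinarith
  -- bound on |∑ over interval|
  have hSy := hC2 y hy1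
  have hSx := hC2 x hx1
  have hAdef : (∑ n ∈ Finset.Icc 1 ⌊y⌋₊, a n) - (∑ n ∈ Finset.Icc 1 ⌊x⌋₊, a n)
      = ∑ n ∈ F, a n := hsplit a
  have hA : |∑ n ∈ F, a n| ≤ 2 * C2 * (2*x) ^ β := by
    rw [← hAdef]
    have htri : |(∑ n ∈ Finset.Icc 1 ⌊y⌋₊, a n) - (∑ n ∈ Finset.Icc 1 ⌊x⌋₊, a n)|
        ≤ |∑ n ∈ Finset.Icc 1 ⌊y⌋₊, a n| + |∑ n ∈ Finset.Icc 1 ⌊x⌋₊, a n| :=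
      abs_sub _ _
    have hyb : y ^ β ≤ (2*x) ^ β := rpow_le_rpow (by linarith) hy2x hβ
    have hxb : x ^ β ≤ (2*x) ^ β := rpow_le_rpow hx0.le (by linarith) hβ
    have h1 : C2 * y ^ β ≤ C2 * (2*x) ^ β := mul_le_mul_of_nonneg_left hyb hC2'
    have h2 : C2 * x ^ β ≤ C2 * (2*x) ^ β := mul_le_mul_of_nonneg_left hxb hC2'
    calc |(∑ n ∈ Finset.Icc 1 ⌊y⌋₊, a n) - (∑ n ∈ Finset.Icc 1 ⌊x⌋₊, a n)|
        ≤ |∑ n ∈ Finset.Icc 1 ⌊y⌋₊, a n| + |∑ n ∈ Finset.Icc 1 ⌊x⌋₊, a n| := htri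
      _ ≤ C2 * y ^ β + C2 * x ^ β := add_le_add hSy hSx
      _ ≤ 2 * C2 * (2*x) ^ β := by linarith
  -- lower bound on sum of squares over interval
  have hQy := hC3 y hy1
  have hQx := hC3 x hx1
  have hBdef : (∑ n ∈ Finset.Icc 1 ⌊y⌋₊, (a n)^2) - (∑ n ∈ Finset.Icc 1 ⌊x⌋₊, (a n)^2)
      = ∑ n ∈ F, (a n)^2 := hsplit _
  have hcy : c * y - c * x = c * x ^ r := by rw [hy]; ring
  have hB : c * x ^ r - C3 * y ^ γ - C3 * x ^ γ ≤ ∑ n ∈ F, (a n)^2 := by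
    rw [← hBdef]
    have hb1 := (abs_le.mp hQy).1
    have hb2 := (abs_le.mp hQx).2
    linarith
  -- combine
  have hxs0 : 0 ≤ x ^ s := rpow_nonneg hx0.le s
  have h2γ : (1:ℝ) ≤ (2:ℝ) ^ γ := by
    have := rpow_le_rpow_of_exponent_le (by norm_num : (1:ℝ) ≤ 2) hγ
    simpa using this
  have h4 : x ^ (α+β) ≤ x ^ s := rpow_le_rpow_of_exponent_le hx1 (by rw [hs]; exact le_max_left _ _)
  have h5 : x ^ γ ≤ x ^ s := rpow_le_rpow_of_exponent_le hx1 (by rw [hs]; exact le_max_right _ _)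
  have h6 : y ^ γ ≤ 2 ^ γ * x ^ s := by
    calc y ^ γ ≤ (2*x) ^ γ := rpow_le_rpow (by linarith) hy2x hγ
    _ = 2 ^ γ * x ^ γ := mul_rpow (by norm_num) hx0.le
    _ ≤ 2 ^ γ * x ^ s := mul_le_mul_of_nonneg_left h5 (by positivity)
  have hterm1 : C3 * y ^ γ ≤ C3 * (2 ^ γ * x ^ s) := mul_le_mul_of_nonneg_left h6 hC3'
  have hterm2 : C3 * x ^ γ ≤ C3 * (2 ^ γ * x ^ s) := by
    apply mul_le_mul_of_nonneg_left _ hC3'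
    calc x ^ γ ≤ x ^ s := h5
    _ ≤ 2 ^ γ * x ^ s := le_mul_of_one_le_left hxs0 h2γ
  have h2ab : (2*x:ℝ) ^ (α+β) = 2 ^ (α+β) * x ^ (α+β) := mul_rpow (by norm_num) hx0.le
  have hMprod : M * (2 * C2 * (2*x) ^ β) = 2 * (C1*C2) * (2*x) ^ (α+β) := by
    rw [hM, Real.rpow_add h2x0]; ring
  have hterm3 : 2 * (C1*C2) * (2*x) ^ (α+β) ≤ 2 * (C1*C2) * (2 ^ (α+β) * x ^ s) := by
    rw [h2ab]
    apply mul_le_mul_of_nonneg_left _ (by positivity)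
    exact mul_le_mul_of_nonneg_left h4 (rpow_nonneg (by norm_num) _)
  have hup2 : (∑ n ∈ F, (a n)^2) ≤ 2 * (C1*C2) * (2 ^ (α+β) * x ^ s) := by
    calc (∑ n ∈ F, (a n)^2) ≤ M * |∑ n ∈ F, a n| := hupper
    _ ≤ M * (2 * C2 * (2*x) ^ β) := mul_le_mul_of_nonneg_left hA hM0
    _ = 2 * (C1*C2) * (2*x) ^ (α+β) := hMprod
    _ ≤ 2 * (C1*C2) * (2 ^ (α+β) * x ^ s) := hterm3
  have hfin : c * x ^ r ≤ K * x ^ s := by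
    have hKeq : K * x ^ s = C3 * (2 ^ γ * x ^ s) + C3 * (2 ^ γ * x ^ s)
        + 2 * (C1*C2) * (2 ^ (α+β) * x ^ s) := by rw [hK]; ring
    rw [hKeq]
    linarith only [hB, hterm1, hterm2, hup2]
  -- contradiction
  have hxr : x ^ (r - s) * x ^ s = x ^ r := by
    rw [← Real.rpow_add hx0, sub_add_cancel]
  have hKc : K < c * x ^ (r - s) := by
    rw [div_lt_iff₀ hc] at hxK
    linarith
  have hlt : K * x ^ s < c * x ^ r := by
    calc K * x ^ s < (c * x ^ (r-s)) * x ^ s :=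
      mul_lt_mul_of_pos_right hKc (rpow_pos_of_pos hx0 s)
    _ = c * x ^ r := by rw [mul_assoc, hxr]
  linarith
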